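/- Assume M > (2/(3√3))√(α³/β) and let (x_l, v_l) be a solution of the controlled discrete Klein–Gordon system on [0,∞) with the feedback control u_l(t) = u(v_l(t)). Then for every l ∈ Λ̄, the velocity converges to zero: lim_{t→∞} v_l(t) = 0. -/

import Mathlib

open Finset Filter

/-- The discrete torus `(ℤ/Dℤ)^n`. -/
abbrev Site (D n : ℕ) : Type := Fin n → ZMod D

/-- Sum over the `2n` neighbors `l ± e_k` of a site `l`. -/
noncomputable def nbrSum {D n : ℕ} (g : Site D n → ℝ) (l : Site D n) : ℝ :=
  ∑ k : Fin n, (g (Function.update l k (l k + 1)) + g (Function.update l k (l k - 1)))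

/-- The discrete Laplacian `Δ_D f(l) = Σ_{l'∼l} (f(l') − f(l))/h²` with `h = 1/D`. -/
noncomputable def lap {D n : ℕ} (f : Site D n → ℝ) (l : Site D n) : ℝ :=
  nbrSum (fun l' => (f l' - f l) / ((1 : ℝ) / (D : ℝ)) ^ 2) l


/-- The feedback control of the paper (equation (2.3)). -/
noncomputable def fb (M a₁ a₂ : ℝ) (v : ℝ) : ℝ :=
  if 2 * a₂ ≤ |v| then 0
  else if a₂ < |v| then -M * (v / |v|) * (2 - |v| / a₂)
  else if a₁ ≤ |v| then -M * (v / |v|)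
  else -M * (v / a₁)

set_option maxHeartbeats 1000000

section Shift
def shiftE {D n : ℕ} (k : Fin n) : Site D n ≃ Site D n where
  toFun l := Function.update l k (l k + 1)
  invFun l := Function.update l k (l k - 1)
  left_inv l := by
    ext j
    by_cases h : j = k
    · subst h; simp
    · simp [Function.update_of_ne h]
  right_inv l := by
    ext j
    by_cases h : j = k
    · subst h; simp
    · simp [Function.update_of_ne h]

lemma shiftE_apply {D n : ℕ} (k : Fin n) (l : Site D n) :
    shiftE k l = Function.update l k (l k + 1) := rfl

lemma shiftE_symm_apply {D n : ℕ} (k : Fin n) (l : Site D n) :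
    (shiftE k).symm l = Function.update l k (l k - 1) := rfl

lemma down_shift {D n : ℕ} (k : Fin n) (l : Site D n) :
    Function.update (shiftE k l) k (shiftE k l k - 1) = l := (shiftE k).left_inv l
end Shift

/-- the local force -/
noncomputable def Fd (α β M a₁ a₂ : ℝ) (w : ℝ) : ℝ := (α - β * w ^ 2) * w + fb M a₁ a₂ w

/-- discrete energy -/
noncomputable def energy (D n : ℕ) [NeZero D] (x v : Site D n → ℝ → ℝ) (t : ℝ) : ℝ :=
  ∑ l : Site D n, ((v l t) ^ 2 / 2
    + (D : ℝ) ^ 2 / 2 * ∑ k : Fin n, (x (shiftE k l) t - x l t) ^ 2)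

lemma sum_lap {D n : ℕ} [NeZero D] (f g : Site D n → ℝ) :
    ∑ l : Site D n, g l * lap f l
      = -(D : ℝ) ^ 2 * ∑ l : Site D n, ∑ k : Fin n,
          (f (shiftE k l) - f l) * (g (shiftE k l) - g l) := by
  have hD : ((D : ℝ)) ≠ 0 := Nat.cast_ne_zero.2 (NeZero.ne D)
  have hstep : ∀ l : Site D n, g l * lap f l
      = ∑ k : Fin n, ((D : ℝ) ^ 2 * (g l * (f (shiftE k l) - f l))
        + (D : ℝ) ^ 2 * (g l * (f (Function.update l k (l k - 1)) - f l))) := by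
    intro l
    rw [lap, nbrSum, Finset.mul_sum]
    refine Finset.sum_congr rfl fun k _ => ?_
    rw [shiftE_apply]
    field_simp
  have hk : ∀ k : Fin n, ∑ l : Site D n,
      ((D : ℝ) ^ 2 * (g l * (f (shiftE k l) - f l))
        + (D : ℝ) ^ 2 * (g l * (f (Function.update l k (l k - 1)) - f l)))
      = ∑ l : Site D n, (-(D : ℝ) ^ 2 * ((f (shiftE k l) - f l) * (g (shiftE k l) - g l))) := by
    intro k
    have hre : ∑ l : Site D n, (D : ℝ) ^ 2 * (g l * (f (Function.update l k (l k - 1)) - f l))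
        = ∑ l : Site D n, (D : ℝ) ^ 2 * (g (shiftE k l) * (f l - f (shiftE k l))) := by
      rw [← Equiv.sum_comp (shiftE k)
        (fun l => (D : ℝ) ^ 2 * (g l * (f (Function.update l k (l k - 1)) - f l)))]
      refine Finset.sum_congr rfl fun l _ => ?_
      rw [down_shift]
    rw [Finset.sum_add_distrib, hre, ← Finset.sum_add_distrib]
    refine Finset.sum_congr rfl fun l _ => ?_
    ring
  calc ∑ l : Site D n, g l * lap f l
      = ∑ l : Site D n, ∑ k : Fin n,
          ((D : ℝ) ^ 2 * (g l * (f (shiftE k l) - f l))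
            + (D : ℝ) ^ 2 * (g l * (f (Function.update l k (l k - 1)) - f l))) :=
        Finset.sum_congr rfl fun l _ => hstep l
    _ = ∑ k : Fin n, ∑ l : Site D n,
          ((D : ℝ) ^ 2 * (g l * (f (shiftE k l) - f l))
            + (D : ℝ) ^ 2 * (g l * (f (Function.update l k (l k - 1)) - f l))) :=
        Finset.sum_comm
    _ = ∑ k : Fin n, ∑ l : Site D n,
          (-(D : ℝ) ^ 2 * ((f (shiftE k l) - f l) * (g (shiftE k l) - g l))) :=
        Finset.sum_congr rfl fun k _ => hk k
    _ = ∑ l : Site D n, ∑ k : Fin n,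
          (-(D : ℝ) ^ 2 * ((f (shiftE k l) - f l) * (g (shiftE k l) - g l))) :=
        Finset.sum_comm
    _ = -(D : ℝ) ^ 2 * ∑ l : Site D n, ∑ k : Fin n,
          ((f (shiftE k l) - f l) * (g (shiftE k l) - g l)) := by
        rw [Finset.mul_sum]
        exact Finset.sum_congr rfl fun l _ => by rw [Finset.mul_sum]

lemma energy_nonneg (D n : ℕ) [NeZero D] (x v : Site D n → ℝ → ℝ) (t : ℝ) :
    0 ≤ energy D n x v t := by
  apply Finset.sum_nonneg
  intro l _
  have h1 : (0:ℝ) ≤ (v l t) ^ 2 / 2 := by positivity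
  have h2 : (0:ℝ) ≤ (D : ℝ) ^ 2 / 2 * ∑ k : Fin n, (x (shiftE k l) t - x l t) ^ 2 := by
    apply mul_nonneg (by positivity)
    exact Finset.sum_nonneg fun k _ => sq_nonneg _
  linarith

lemma summand_nonneg (D n : ℕ) [NeZero D] (x v : Site D n → ℝ → ℝ) (t : ℝ) :
    ∀ l ∈ (univ : Finset (Site D n)), 0 ≤ (v l t) ^ 2 / 2
      + (D : ℝ) ^ 2 / 2 * ∑ k : Fin n, (x (shiftE k l) t - x l t) ^ 2 := by
  intro l _
  have h2 : (0:ℝ) ≤ (D : ℝ) ^ 2 / 2 * ∑ k : Fin n, (x (shiftE k l) t - x l t) ^ 2 :=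
    mul_nonneg (by positivity) (Finset.sum_nonneg fun k _ => sq_nonneg _)
  positivity

lemma sq_le_two_energy (D n : ℕ) [NeZero D] (x v : Site D n → ℝ → ℝ) (t : ℝ) (l : Site D n) :
    (v l t) ^ 2 ≤ 2 * energy D n x v t := by
  have h := Finset.single_le_sum (summand_nonneg D n x v t) (Finset.mem_univ l)
  have h2 : (0:ℝ) ≤ (D : ℝ) ^ 2 / 2 * ∑ k : Fin n, (x (shiftE k l) t - x l t) ^ 2 :=
    mul_nonneg (by positivity) (Finset.sum_nonneg fun k _ => sq_nonneg _)
  rw [energy]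
  linarith

lemma diff_sq_le_energy (D n : ℕ) [NeZero D] (x v : Site D n → ℝ → ℝ) (t : ℝ)
    (l : Site D n) (k : Fin n) :
    (D : ℝ) ^ 2 / 2 * (x (shiftE k l) t - x l t) ^ 2 ≤ energy D n x v t := by
  have h := Finset.single_le_sum (summand_nonneg D n x v t) (Finset.mem_univ l)
  have h3 : (x (shiftE k l) t - x l t) ^ 2 ≤ ∑ k' : Fin n, (x (shiftE k' l) t - x l t) ^ 2 :=
    Finset.single_le_sum (f := fun k' => (x (shiftE k' l) t - x l t) ^ 2)
      (fun k' _ => sq_nonneg _) (Finset.mem_univ k)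
  have h4 : (D : ℝ) ^ 2 / 2 * (x (shiftE k l) t - x l t) ^ 2
      ≤ (D : ℝ) ^ 2 / 2 * ∑ k' : Fin n, (x (shiftE k' l) t - x l t) ^ 2 :=
    mul_le_mul_of_nonneg_left h3 (by positivity)
  have h5 : (0:ℝ) ≤ (v l t) ^ 2 / 2 := by positivity
  rw [energy]
  linarith

lemma energy_hasDerivAt (D n : ℕ) [NeZero D] (α β M a₁ a₂ : ℝ)
    (x v : Site D n → ℝ → ℝ) (t : ℝ)
    (hx : ∀ l, HasDerivAt (x l) (v l t) t)
    (hv : ∀ l, HasDerivAt (v l) (lap (fun l' => x l' t) l + Fd α β M a₁ a₂ (v l t)) t) :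
    HasDerivAt (energy D n x v) (∑ l : Site D n, v l t * Fd α β M a₁ a₂ (v l t)) t := by
  have h1 : HasDerivAt (fun s => ∑ l : Site D n, ((v l s) ^ 2 / 2
      + (D : ℝ) ^ 2 / 2 * ∑ k : Fin n, (x (shiftE k l) s - x l s) ^ 2))
      (∑ l : Site D n, (v l t * (lap (fun l' => x l' t) l + Fd α β M a₁ a₂ (v l t))
        + (D : ℝ) ^ 2 / 2 * ∑ k : Fin n,
            (2 * (x (shiftE k l) t - x l t) * (v (shiftE k l) t - v l t)))) t := by
    apply HasDerivAt.fun_sum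
    intro l _
    apply HasDerivAt.add
    · have h := ((hv l).fun_pow 2).div_const 2
      convert h using 1
      · rfl
      push_cast; ring
    · have h2 : HasDerivAt (fun s => ∑ k : Fin n, (x (shiftE k l) s - x l s) ^ 2)
          (∑ k : Fin n, (2 * (x (shiftE k l) t - x l t) * (v (shiftE k l) t - v l t))) t := by
        apply HasDerivAt.fun_sum
        intro k _
        have h := (((hx (shiftE k l)).fun_sub (hx l)).fun_pow 2)
        convert h using 1
        · rfl
        push_cast; ring
      exact h2.const_mul _
  have h2 : (∑ l : Site D n, (v l t * (lap (fun l' => x l' t) l + Fd α β M a₁ a₂ (v l t))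
        + (D : ℝ) ^ 2 / 2 * ∑ k : Fin n,
            (2 * (x (shiftE k l) t - x l t) * (v (shiftE k l) t - v l t))))
      = ∑ l : Site D n, v l t * Fd α β M a₁ a₂ (v l t) := by
    have key := sum_lap (fun l' => x l' t) (fun l' => v l' t)
    have e1 : ∑ l : Site D n, (D : ℝ) ^ 2 / 2 * ∑ k : Fin n,
          (2 * (x (shiftE k l) t - x l t) * (v (shiftE k l) t - v l t))
        = (D : ℝ) ^ 2 * ∑ l : Site D n, ∑ k : Fin n,
          ((x (shiftE k l) t - x l t) * (v (shiftE k l) t - v l t)) := by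
      rw [Finset.mul_sum]
      refine Finset.sum_congr rfl fun l _ => ?_
      rw [Finset.mul_sum, Finset.mul_sum]
      exact Finset.sum_congr rfl fun k _ => by ring
    rw [Finset.sum_add_distrib, e1]
    have e2 : ∑ l : Site D n, v l t * (lap (fun l' => x l' t) l + Fd α β M a₁ a₂ (v l t))
        = (∑ l : Site D n, v l t * lap (fun l' => x l' t) l)
          + ∑ l : Site D n, v l t * Fd α β M a₁ a₂ (v l t) := by
      rw [← Finset.sum_add_distrib]
      exact Finset.sum_congr rfl fun l _ => by ring
    rw [e2, key]
    ring
  rw [← h2]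
  unfold energy
  exact h1

lemma fb_abs_le (M a₁ a₂ : ℝ) (hM : 0 < M) (ha₁ : 0 < a₁) (ha₂ : 0 < a₂) (w : ℝ) :
    |fb M a₁ a₂ w| ≤ M := by
  rw [fb]
  split_ifs with h1 h2 h3
  · simp; linarith
  · have hw0 : w ≠ 0 := by
      intro h; rw [h] at h2; simp only [abs_zero] at h2; linarith
    have habs : 0 < |w| := abs_pos.2 hw0
    have h2a : |w| / a₂ ≤ 2 := by rw [div_le_iff₀ ha₂]; linarith [not_le.1 h1]
    have h2b : 1 ≤ |w| / a₂ := by rw [le_div_iff₀ ha₂]; linarith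
    rw [abs_mul, abs_mul, abs_neg, abs_of_nonneg hM.le, abs_div, abs_abs,
      div_self habs.ne', mul_one, abs_of_nonneg (by linarith : (0:ℝ) ≤ 2 - |w| / a₂)]
    nlinarith
  · have hw0 : w ≠ 0 := by
      intro h; rw [h] at h3; simp only [abs_zero] at h3; linarith
    have habs : 0 < |w| := abs_pos.2 hw0
    rw [abs_mul, abs_neg, abs_of_nonneg hM.le, abs_div, abs_abs, div_self habs.ne', mul_one]
  · rw [abs_mul, abs_neg, abs_of_nonneg hM.le, abs_div, abs_of_nonneg ha₁.le]
    have : |w| / a₁ ≤ 1 := by rw [div_le_one ha₁]; linarith [not_le.1 h3]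
    nlinarith

lemma cubic_bound' (α β p : ℝ) (hβ : 0 < β) (hp2 : 3 * β * p ^ 2 = α)
    (hp0 : 0 ≤ p) (s : ℝ) (hs : 0 ≤ s) :
    (α - β * s ^ 2) * s ≤ 2 / 3 * α * p := by
  nlinarith [mul_nonneg (mul_nonneg hβ.le (sq_nonneg (s - p))) (by linarith : (0:ℝ) ≤ s + 2 * p)]

lemma cubic_bound (α β : ℝ) (hα : 0 < α) (hβ : 0 < β) (s : ℝ) (hs : 0 ≤ s) :
    (α - β * s ^ 2) * s ≤ 2 / (3 * Real.sqrt 3) * Real.sqrt (α ^ 3 / β) := by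
  have hp2 : 3 * β * Real.sqrt (α / (3 * β)) ^ 2 = α := by
    rw [Real.sq_sqrt (by positivity)]; field_simp
  have hr0 : (0:ℝ) < Real.sqrt 3 := Real.sqrt_pos.2 (by norm_num)
  have h33 : Real.sqrt 3 * Real.sqrt 3 = 3 := Real.mul_self_sqrt (by norm_num)
  have hq : Real.sqrt (α ^ 3 / β) = Real.sqrt 3 * α * Real.sqrt (α / (3 * β)) := by
    rw [show Real.sqrt 3 * α * Real.sqrt (α / (3 * β))
        = Real.sqrt ((Real.sqrt 3 * α * Real.sqrt (α / (3 * β))) ^ 2) from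
      (Real.sqrt_sq (by positivity)).symm]
    congr 1
    have h2 : Real.sqrt (α / (3 * β)) ^ 2 = α / (3 * β) := Real.sq_sqrt (by positivity)
    rw [mul_pow, mul_pow, sq, h33, h2]
    field_simp
  have e : 2 / (3 * Real.sqrt 3) * Real.sqrt (α ^ 3 / β)
      = 2 / 3 * α * Real.sqrt (α / (3 * β)) := by
    rw [hq]
    have hr2 : Real.sqrt 3 ^ 2 = 3 := Real.sq_sqrt (by norm_num)
    field_simp
  rw [e]
  exact cubic_bound' α β _ hβ hp2 (Real.sqrt_nonneg _) s hs

lemma damping' (α β M a₁ a₂ Mx c : ℝ) (hα : 0 < α) (hβ : 0 < β) (hM0 : 0 < M)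
    (ha₁0 : 0 < a₁) (ha12 : a₁ ≤ a₂)
    (hcub : ∀ s : ℝ, 0 ≤ s → (α - β * s ^ 2) * s ≤ Mx)
    (hc0 : 0 < c)
    (hcc1 : c ≤ M / a₁ - α)
    (hcc2 : c ≤ a₁ * (M - Mx) / a₂ ^ 2)
    (hca : c ≤ β * a₂ ^ 2 - α)
    (hMx : Mx < M) :
    ∀ w : ℝ, w * ((α - β * w ^ 2) * w + fb M a₁ a₂ w) ≤ -c * w ^ 2 := by
  have ha₂0 : 0 < a₂ := lt_of_lt_of_le ha₁0 ha12
  intro w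
  have hw2 : w ^ 2 = |w| ^ 2 := (sq_abs w).symm
  have hmain : ∀ u : ℝ, a₂ ^ 2 ≤ u ^ 2 → u * ((α - β * u ^ 2) * u) ≤ -c * u ^ 2 := by
    intro u hu
    have e1 : (c + α) * u ^ 2 ≤ β * a₂ ^ 2 * u ^ 2 :=
      mul_le_mul_of_nonneg_right (by linarith) (sq_nonneg u)
    have e2 : β * a₂ ^ 2 * u ^ 2 ≤ β * u ^ 2 * u ^ 2 :=
      mul_le_mul_of_nonneg_right (mul_le_mul_of_nonneg_left hu hβ.le) (sq_nonneg u)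
    nlinarith [e1, e2]
  rw [fb]
  split_ifs with h1 h2 h3
  · -- |w| ≥ 2a₂
    have ha2w : a₂ ^ 2 ≤ w ^ 2 := by
      nlinarith [sq_abs w, mul_self_le_mul_self (by positivity : (0:ℝ) ≤ 2 * a₂) h1, ha₂0.le]
    have := hmain w ha2w
    linarith [this]
  · -- a₂ < |w| < 2a₂
    have hw0 : w ≠ 0 := by
      intro h; rw [h] at h2; simp only [abs_zero] at h2; linarith
    have habs : 0 < |w| := abs_pos.2 hw0
    have hdiv : w * (w / |w|) = |w| := by
      rw [div_eq_mul_inv, ← mul_assoc, ← sq, hw2, sq, mul_assoc,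
        mul_inv_cancel₀ habs.ne', mul_one]
    have h2a : |w| / a₂ ≤ 2 := by rw [div_le_iff₀ ha₂0]; linarith [not_le.1 h1]
    have hterm : w * (-M * (w / |w|) * (2 - |w| / a₂)) ≤ 0 := by
      have e : w * (-M * (w / |w|) * (2 - |w| / a₂))
          = -(M * (2 - |w| / a₂)) * (w * (w / |w|)) := by ring
      rw [e, hdiv]
      have : 0 ≤ M * (2 - |w| / a₂) * |w| :=
        mul_nonneg (mul_nonneg hM0.le (by linarith)) habs.le
      nlinarith
    have ha2w : a₂ ^ 2 ≤ w ^ 2 := by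
      nlinarith [sq_abs w, mul_self_le_mul_self ha₂0.le (le_of_lt h2)]
    have := hmain w ha2w
    rw [mul_add]
    linarith [this, hterm]
  · -- a₁ ≤ |w| ≤ a₂
    have hw0 : w ≠ 0 := by
      intro h; rw [h] at h3; simp only [abs_zero] at h3; linarith
    have habs : 0 < |w| := abs_pos.2 hw0
    have hdiv : w * (w / |w|) = |w| := by
      rw [div_eq_mul_inv, ← mul_assoc, ← sq, hw2, sq, mul_assoc,
        mul_inv_cancel₀ habs.ne', mul_one]
    have hcub' := hcub |w| (abs_nonneg w)
    rw [mul_add]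
    have e1 : w * (-M * (w / |w|)) = -(M * |w|) := by
      rw [show w * (-M * (w / |w|)) = -M * (w * (w / |w|)) by ring, hdiv]; ring
    rw [e1]
    have h5 := mul_le_mul_of_nonneg_right hcub' habs.le
    have h6 : (M - Mx) * a₁ ≤ (M - Mx) * |w| :=
      mul_le_mul_of_nonneg_left h3 (by linarith)
    have h7 : w * ((α - β * w ^ 2) * w) = (α - β * |w| ^ 2) * |w| * |w| := by
      linear_combination (α - β * (w ^ 2 + |w| ^ 2)) * hw2
    rw [h7]
    have hwa2 : w ^ 2 ≤ a₂ ^ 2 := by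
      nlinarith [sq_abs w, mul_self_le_mul_self (abs_nonneg w) (not_lt.1 h2)]
    have hfin : c * w ^ 2 ≤ a₁ * (M - Mx) := by
      calc c * w ^ 2 ≤ a₁ * (M - Mx) / a₂ ^ 2 * w ^ 2 :=
            mul_le_mul_of_nonneg_right hcc2 (sq_nonneg w)
      _ ≤ a₁ * (M - Mx) / a₂ ^ 2 * a₂ ^ 2 := by
            exact mul_le_mul_of_nonneg_left hwa2
              (div_nonneg (mul_nonneg ha₁0.le (by linarith)) (sq_nonneg _))
      _ = a₁ * (M - Mx) := by field_simp
    linarith [h5, h6, hfin]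
  · -- |w| < a₁
    have e : w * ((α - β * w ^ 2) * w + -M * (w / a₁)) = (α - M / a₁) * w ^ 2 - β * w ^ 4 := by
      field_simp; ring
    rw [e]
    nlinarith [mul_le_mul_of_nonneg_right hcc1 (sq_nonneg w), sq_nonneg (w ^ 2),
      mul_nonneg hβ.le (sq_nonneg (w ^ 2))]

lemma damping (α β M γ a₁ a₂ : ℝ) (hα : 0 < α) (hβ : 0 < β)
    (hM : 2 / (3 * Real.sqrt 3) * Real.sqrt (α ^ 3 / β) < M)
    (hγ : max 1 (1 / M * Real.sqrt (α ^ 3 / β)) < γ)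
    (ha₁ : a₁ = γ⁻¹ * Real.sqrt (α / β)) (ha₂ : a₂ = γ * Real.sqrt (α / β)) :
    0 < a₁ ∧ a₁ ≤ a₂ ∧ 0 < M ∧
    ∃ c > 0, ∀ w : ℝ, w * ((α - β * w ^ 2) * w + fb M a₁ a₂ w) ≤ -c * w ^ 2 := by
  have hγ1 : 1 < γ := lt_of_le_of_lt (le_max_left _ _) hγ
  have hγ0 : 0 < γ := by linarith
  have hs0 : 0 < Real.sqrt (α / β) := Real.sqrt_pos.2 (by positivity)
  have hs2 : Real.sqrt (α / β) ^ 2 = α / β := Real.sq_sqrt (by positivity)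
  have hbs : β * Real.sqrt (α / β) ^ 2 = α := by rw [hs2]; field_simp
  have hMx0 : 0 < 2 / (3 * Real.sqrt 3) * Real.sqrt (α ^ 3 / β) := by
    have h1 : 0 < Real.sqrt (α ^ 3 / β) := Real.sqrt_pos.2 (by positivity)
    have h3 : (0:ℝ) < Real.sqrt 3 := Real.sqrt_pos.2 (by norm_num)
    positivity
  have hM0 : 0 < M := lt_trans hMx0 hM
  have ha₁0 : 0 < a₁ := by rw [ha₁]; positivity
  have ha₂0 : 0 < a₂ := by rw [ha₂]; positivity
  have ha12 : a₁ ≤ a₂ := by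
    rw [ha₁, ha₂]
    have h1 : γ⁻¹ ≤ γ := by
      rw [inv_le_iff_one_le_mul₀ hγ0]; nlinarith
    nlinarith [hs0.le]
  have hq : Real.sqrt (α ^ 3 / β) = α * Real.sqrt (α / β) := by
    rw [show α * Real.sqrt (α / β) = Real.sqrt ((α * Real.sqrt (α / β)) ^ 2) from
      (Real.sqrt_sq (by positivity)).symm]
    congr 1
    rw [mul_pow, hs2]; field_simp
  have hMγ : α * Real.sqrt (α / β) < M * γ := by
    have h1 := lt_of_le_of_lt (le_max_right 1 (1 / M * Real.sqrt (α ^ 3 / β))) hγ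
    rw [hq] at h1
    calc α * Real.sqrt (α / β) = M * (1 / M * (α * Real.sqrt (α / β))) := by field_simp
    _ < M * γ := mul_lt_mul_of_pos_left h1 hM0
  have hc1 : 0 < M / a₁ - α := by
    have e : M / a₁ = M * γ / Real.sqrt (α / β) := by rw [ha₁]; field_simp
    rw [e, sub_pos, lt_div_iff₀ hs0]; linarith
  have hγ2 : 1 < γ ^ 2 := by nlinarith
  have hba : α < β * a₂ ^ 2 := by
    rw [ha₂, mul_pow]
    nlinarith [hbs, mul_pos (sub_pos.2 hγ2) hα]
  have hc2 : 0 < a₁ * (M - 2 / (3 * Real.sqrt 3) * Real.sqrt (α ^ 3 / β)) / a₂ ^ 2 :=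
    div_pos (mul_pos ha₁0 (by linarith)) (by positivity)
  have hc3 : 0 < β * a₂ ^ 2 - α := by linarith
  refine ⟨ha₁0, ha12, hM0,
    min (M / a₁ - α) (min (a₁ * (M - 2 / (3 * Real.sqrt 3) * Real.sqrt (α ^ 3 / β)) / a₂ ^ 2)
      (β * a₂ ^ 2 - α)), by positivity, ?_⟩
  exact damping' α β M a₁ a₂ _ _ hα hβ hM0 ha₁0 ha12
    (fun s hs => cubic_bound α β hα hβ s hs)
    (by positivity)
    (min_le_left _ _)
    (le_trans (min_le_right _ _) (min_le_left _ _))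
    (le_trans (min_le_right _ _) (min_le_right _ _))
    hM

/-- Lemma 2.1: under the feedback control, every velocity converges to zero. -/
theorem velocities_tend_to_zero (D n : ℕ) [NeZero D] (hn : 1 ≤ n)
    (α β M γ : ℝ) (hα : 0 < α) (hβ : 0 < β)
    (hM : 2 / (3 * Real.sqrt 3) * Real.sqrt (α ^ 3 / β) < M)
    (hγ : max 1 (1 / M * Real.sqrt (α ^ 3 / β)) < γ)
    (a₁ a₂ : ℝ)
    (ha₁ : a₁ = γ⁻¹ * Real.sqrt (α / β)) (ha₂ : a₂ = γ * Real.sqrt (α / β))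
    (x v : Site D n → ℝ → ℝ)
    (hx : ∀ l t, 0 ≤ t → HasDerivAt (x l) (v l t) t)
    (hv : ∀ l t, 0 ≤ t → HasDerivAt (v l)
      (lap (fun l' => x l' t) l + (α - β * (v l t) ^ 2) * v l t + fb M a₁ a₂ (v l t)) t) :
    ∀ l : Site D n, Filter.Tendsto (fun t => v l t) Filter.atTop (nhds 0) := by
  obtain ⟨ha₁0, ha12, hM0, c, hc0, hdamp⟩ := damping α β M γ a₁ a₂ hα hβ hM hγ ha₁ ha₂
  have ha₂0 : 0 < a₂ := lt_of_lt_of_le ha₁0 ha12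
  have hD0 : (0:ℝ) < (D : ℝ) := by
    exact_mod_cast Nat.pos_of_ne_zero (NeZero.ne D)
  -- rephrase hv
  have hv' : ∀ l' t, 0 ≤ t → HasDerivAt (v l')
      (lap (fun l'' => x l'' t) l' + Fd α β M a₁ a₂ (v l' t)) t := by
    intro l' t ht
    have h := hv l' t ht
    rw [Fd, ← add_assoc]
    exact h
  have hdamp' : ∀ w : ℝ, w * Fd α β M a₁ a₂ w ≤ -c * w ^ 2 := fun w => hdamp w
  intro l
  -- continuity of extended velocity
  have hvc : ∀ l', Continuous (fun s : ℝ => v l' (max s 0)) := by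
    intro l'
    rw [continuous_iff_continuousAt]
    intro t
    exact ContinuousAt.comp
      ((hv' l' (max t 0) (le_max_right _ _)).differentiableAt.continuousAt)
      ((continuous_id.max continuous_const).continuousAt)
  set Q : ℝ → ℝ := fun s => (v l (max s 0)) ^ 2 with hQdef
  have hQc : Continuous Q := (hvc l).pow 2
  have hQ0 : ∀ s, 0 ≤ Q s := fun s => sq_nonneg _
  set I : ℝ → ℝ := fun t => ∫ s in (0:ℝ)..t, Q s with hIdef
  have hI : ∀ t, HasDerivAt I (Q t) t := fun t =>
    intervalIntegral.integral_hasDerivAt_right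
      (hQc.intervalIntegrable (μ := MeasureTheory.volume) 0 t)
      (hQc.stronglyMeasurableAtFilter _ _) hQc.continuousAt
  have hIdiff : ∀ t₁ t₂ : ℝ, I t₂ - I t₁ = ∫ s in t₁..t₂, Q s := by
    intro t₁ t₂
    have h := intervalIntegral.integral_add_adjacent_intervals
      (hQc.intervalIntegrable (μ := MeasureTheory.volume) 0 t₁)
      (hQc.intervalIntegrable (μ := MeasureTheory.volume) t₁ t₂)
    simp only [hIdef]
    linarith [h]
  -- H = E + c I is antitone on Ici 0
  set H : ℝ → ℝ := fun t => energy D n x v t + c * I t with hHdef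
  have hH : ∀ t, 0 ≤ t → HasDerivAt H
      ((∑ l' : Site D n, v l' t * Fd α β M a₁ a₂ (v l' t)) + c * Q t) t := by
    intro t ht
    exact (energy_hasDerivAt D n α β M a₁ a₂ x v t
      (fun l' => hx l' t ht) (fun l' => hv' l' t ht)).add ((hI t).const_mul c)
  have hHderiv : ∀ t, 0 < t → deriv H t ≤ 0 := by
    intro t ht
    rw [(hH t ht.le).deriv]
    have h2 : ∑ l' : Site D n, v l' t * Fd α β M a₁ a₂ (v l' t)
        ≤ ∑ l' : Site D n, -c * (v l' t) ^ 2 :=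
      Finset.sum_le_sum fun l' _ => hdamp' (v l' t)
    have h3 : (v l t) ^ 2 ≤ ∑ l' : Site D n, (v l' t) ^ 2 :=
      Finset.single_le_sum (f := fun l' => (v l' t) ^ 2)
        (fun _ _ => sq_nonneg _) (Finset.mem_univ l)
    have h4 : ∑ l' : Site D n, -c * (v l' t) ^ 2 = -c * ∑ l' : Site D n, (v l' t) ^ 2 := by
      rw [Finset.mul_sum]
    have hQt : Q t = (v l t) ^ 2 := by
      simp only [hQdef, max_eq_left ht.le]
    rw [hQt]
    have h5 : c * (v l t) ^ 2 ≤ c * ∑ l' : Site D n, (v l' t) ^ 2 :=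
      mul_le_mul_of_nonneg_left h3 hc0.le
    linarith [h2, h4 ▸ h2, h5]
  have hHanti : AntitoneOn H (Set.Ici 0) := by
    apply antitoneOn_of_deriv_nonpos (convex_Ici 0)
    · exact fun t ht => (hH t ht).differentiableAt.continuousAt.continuousWithinAt
    · intro t ht
      rw [interior_Ici] at ht
      exact ((hH t (le_of_lt ht)).differentiableAt).differentiableWithinAt
    · intro t ht
      rw [interior_Ici] at ht
      exact hHderiv t ht
  have hI0 : I 0 = 0 := intervalIntegral.integral_same
  have hH0 : H 0 = energy D n x v 0 := by simp [hHdef, hI0]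
  have hInn : ∀ t, 0 ≤ t → 0 ≤ I t := fun t ht =>
    intervalIntegral.integral_nonneg ht (fun s _ => hQ0 s)
  have hHle : ∀ t, 0 ≤ t → H t ≤ energy D n x v 0 := by
    intro t ht
    rw [← hH0]
    exact hHanti (Set.mem_Ici.2 le_rfl) (Set.mem_Ici.2 ht) ht
  have hEle : ∀ t, 0 ≤ t → energy D n x v t ≤ energy D n x v 0 := by
    intro t ht
    have h1 := hHle t ht
    have h2 := hInn t ht
    have h3 : 0 ≤ c * I t := mul_nonneg hc0.le h2
    simp only [hHdef] at h1
    linarith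
  have hIle : ∀ t, 0 ≤ t → I t ≤ energy D n x v 0 / c := by
    intro t ht
    have h1 := hHle t ht
    have h2 := energy_nonneg D n x v t
    simp only [hHdef] at h1
    rw [le_div_iff₀ hc0]
    linarith
  set E0 := energy D n x v 0 with hE0def
  have hE00 : 0 ≤ E0 := energy_nonneg D n x v 0
  set R := Real.sqrt (2 * E0) with hRdef
  have hR0 : 0 ≤ R := Real.sqrt_nonneg _
  have hR2 : R ^ 2 = 2 * E0 := Real.sq_sqrt (by linarith)
  clear_value E0 R
  clear_value Q I H
  have hvbd : ∀ l' t, 0 ≤ t → |v l' t| ≤ R := by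
    intro l' t ht
    have h1 := sq_le_two_energy D n x v t l'
    have h2 := hEle t ht
    calc |v l' t| = Real.sqrt ((v l' t) ^ 2) := (Real.sqrt_sq_eq_abs _).symm
    _ ≤ R := by rw [hRdef]; exact Real.sqrt_le_sqrt (by linarith)
  have hxbd : ∀ l' (k : Fin n) t, 0 ≤ t → |x (shiftE k l') t - x l' t| ≤ R / D := by
    intro l' k t ht
    have h1 := diff_sq_le_energy D n x v t l' k
    have h2 := hEle t ht
    have h3 : (x (shiftE k l') t - x l' t) ^ 2 ≤ (R / D) ^ 2 := by
      rw [div_pow, hR2]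
      rw [le_div_iff₀ (by positivity)]
      nlinarith
    calc |x (shiftE k l') t - x l' t| = Real.sqrt ((x (shiftE k l') t - x l' t) ^ 2) :=
          (Real.sqrt_sq_eq_abs _).symm
    _ ≤ Real.sqrt ((R / D) ^ 2) := Real.sqrt_le_sqrt h3
    _ = R / D := Real.sqrt_sq (by positivity)
  -- bound on the Laplacian at site l
  have hlapbd : ∀ t, 0 ≤ t → |lap (fun l' => x l' t) l| ≤ 2 * n * (D : ℝ) * R := by
    intro t ht
    rw [lap, nbrSum]
    have hbd : ∀ k : Fin n,
        |(x (Function.update l k (l k + 1)) t - x l t) / ((1:ℝ) / (D:ℝ)) ^ 2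
          + (x (Function.update l k (l k - 1)) t - x l t) / ((1:ℝ) / (D:ℝ)) ^ 2|
        ≤ 2 * (D : ℝ) * R := by
      intro k
      have e : ∀ a : ℝ, a / ((1:ℝ) / (D:ℝ)) ^ 2 = a * (D:ℝ) ^ 2 := by
        intro a; field_simp
      rw [e, e]
      have h1 : |x (Function.update l k (l k + 1)) t - x l t| ≤ R / D := by
        have := hxbd l k t ht
        rwa [shiftE_apply] at this
      have h2 : |x (Function.update l k (l k - 1)) t - x l t| ≤ R / D := by
        have h3 := hxbd ((shiftE k).symm l) k t ht
        rw [Equiv.apply_symm_apply, shiftE_symm_apply] at h3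
        rw [abs_sub_comm] at h3
        exact h3
      calc |(x (Function.update l k (l k + 1)) t - x l t) * (D:ℝ) ^ 2
            + (x (Function.update l k (l k - 1)) t - x l t) * (D:ℝ) ^ 2|
          ≤ |(x (Function.update l k (l k + 1)) t - x l t) * (D:ℝ) ^ 2|
            + |(x (Function.update l k (l k - 1)) t - x l t) * (D:ℝ) ^ 2| := abs_add_le _ _
        _ = |x (Function.update l k (l k + 1)) t - x l t| * (D:ℝ) ^ 2
            + |x (Function.update l k (l k - 1)) t - x l t| * (D:ℝ) ^ 2 := by
            rw [abs_mul, abs_mul, abs_of_nonneg (by positivity : (0:ℝ) ≤ (D:ℝ) ^ 2)]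
        _ ≤ R / D * (D:ℝ) ^ 2 + R / D * (D:ℝ) ^ 2 := by
            have := mul_le_mul_of_nonneg_right h1 (by positivity : (0:ℝ) ≤ (D:ℝ) ^ 2)
            have := mul_le_mul_of_nonneg_right h2 (by positivity : (0:ℝ) ≤ (D:ℝ) ^ 2)
            linarith
        _ = 2 * (D : ℝ) * R := by field_simp; ring
    calc |∑ k : Fin n, ((x (Function.update l k (l k + 1)) t - x l t) / ((1:ℝ) / (D:ℝ)) ^ 2
            + (x (Function.update l k (l k - 1)) t - x l t) / ((1:ℝ) / (D:ℝ)) ^ 2)|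
        ≤ ∑ k : Fin n, |(x (Function.update l k (l k + 1)) t - x l t) / ((1:ℝ) / (D:ℝ)) ^ 2
            + (x (Function.update l k (l k - 1)) t - x l t) / ((1:ℝ) / (D:ℝ)) ^ 2| :=
          Finset.abs_sum_le_sum_abs _ _
      _ ≤ ∑ _k : Fin n, 2 * (D : ℝ) * R := Finset.sum_le_sum fun k _ => hbd k
      _ = 2 * n * (D : ℝ) * R := by
          rw [Finset.sum_const, Finset.card_univ, Fintype.card_fin]
          simp [nsmul_eq_mul]; ring
  -- bound on Fd
  have hFbd : ∀ w : ℝ, |w| ≤ R → |Fd α β M a₁ a₂ w| ≤ (α + β * R ^ 2) * R + M := by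
    intro w hw
    rw [Fd]
    have h1 : |(α - β * w ^ 2) * w| ≤ (α + β * R ^ 2) * R := by
      rw [abs_mul]
      have hw2 : w ^ 2 ≤ R ^ 2 := by nlinarith [sq_abs w, abs_nonneg w]
      have h2 : |α - β * w ^ 2| ≤ α + β * R ^ 2 := by
        rw [abs_le]
        constructor <;> nlinarith [sq_nonneg w]
      have h3 : (0:ℝ) ≤ α + β * R ^ 2 := by positivity
      calc |α - β * w ^ 2| * |w| ≤ (α + β * R ^ 2) * |w| :=
            mul_le_mul_of_nonneg_right h2 (abs_nonneg w)
        _ ≤ (α + β * R ^ 2) * R := mul_le_mul_of_nonneg_left hw h3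
    have h2 := fb_abs_le M a₁ a₂ hM0 ha₁0 ha₂0 w
    calc |(α - β * w ^ 2) * w + fb M a₁ a₂ w|
        ≤ |(α - β * w ^ 2) * w| + |fb M a₁ a₂ w| := abs_add_le _ _
      _ ≤ (α + β * R ^ 2) * R + M := by linarith
  set K := 2 * n * (D : ℝ) * R + ((α + β * R ^ 2) * R + M) with hKdef
  have hK0 : 0 ≤ K := by
    have : (0:ℝ) ≤ 2 * n * (D : ℝ) * R := by positivity
    have : (0:ℝ) ≤ (α + β * R ^ 2) * R := by positivity
    simp only [hKdef]
    linarith [hM0]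
  -- g = (v l ·)² is Lipschitz on Ici 0
  clear_value K
  set L := 2 * R * K + 1 with hLdef
  have hL0 : 0 < L := by simp only [hLdef]; nlinarith [mul_nonneg hR0 hK0]
  clear_value L
  set g : ℝ → ℝ := fun t => (v l t) ^ 2 with hgdef
  set g' : ℝ → ℝ := fun t =>
    2 * v l t * (lap (fun l' => x l' t) l + Fd α β M a₁ a₂ (v l t)) with hg'def
  have hgderiv : ∀ t ∈ Set.Ici (0:ℝ), HasDerivWithinAt g (g' t) (Set.Ici 0) t := by
    intro t ht
    have h := (hv' l t ht).fun_pow 2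
    have h2 : HasDerivAt g (g' t) t := by
      simp only [hgdef, hg'def]
      convert h using 1
      · rfl
      · rfl
      push_cast; ring
    exact h2.hasDerivWithinAt
  have hg'bd : ∀ t ∈ Set.Ici (0:ℝ), ‖g' t‖ ≤ L := by
    intro t ht
    rw [Real.norm_eq_abs]
    simp only [hg'def]
    rw [abs_mul, abs_mul]
    have h1 := hvbd l t ht
    have h2 : |lap (fun l' => x l' t) l + Fd α β M a₁ a₂ (v l t)| ≤ K := by
      calc |lap (fun l' => x l' t) l + Fd α β M a₁ a₂ (v l t)|
          ≤ |lap (fun l' => x l' t) l| + |Fd α β M a₁ a₂ (v l t)| := abs_add_le _ _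
        _ ≤ K := by
            have := hlapbd t ht
            have := hFbd (v l t) h1
            simp only [hKdef]
            linarith
    have habs2 : |(2:ℝ)| = 2 := by norm_num
    rw [habs2]
    calc 2 * |v l t| * |lap (fun l' => x l' t) l + Fd α β M a₁ a₂ (v l t)|
        ≤ 2 * R * K := by
          apply mul_le_mul (by linarith [h1]) h2 (abs_nonneg _) (by positivity)
      _ ≤ L := by simp only [hLdef]; linarith
  have hLip : ∀ s t : ℝ, 0 ≤ t → t ≤ s → |g s - g t| ≤ L * (s - t) := by
    intro s t ht hts
    have h := Convex.norm_image_sub_le_of_norm_hasDerivWithin_le hgderiv hg'bd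
      (convex_Ici 0) (Set.mem_Ici.2 ht) (Set.mem_Ici.2 (le_trans ht hts))
    rw [Real.norm_eq_abs, Real.norm_eq_abs, abs_of_nonneg (by linarith : (0:ℝ) ≤ s - t)] at h
    exact h
  -- I is monotone and bounded above
  have hImono : Monotone I := by
    intro t₁ t₂ h12
    have h1 := hIdiff t₁ t₂
    have h2 : 0 ≤ ∫ s in t₁..t₂, Q s :=
      intervalIntegral.integral_nonneg h12 (fun s _ => hQ0 s)
    linarith
  have hIbdd : BddAbove (Set.range I) := by
    refine ⟨max (E0 / c) 0, ?_⟩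
    rintro _ ⟨t, rfl⟩
    rcases le_or_gt 0 t with ht | ht
    · exact le_trans (hIle t ht) (le_max_left _ _)
    · have := hImono ht.le
      rw [hI0] at this
      exact le_trans this (le_max_right _ _)
  have hIconv : Tendsto I atTop (nhds (⨆ t, I t)) := tendsto_atTop_ciSup hImono hIbdd
  -- g tends to 0
  have hgto : Tendsto g atTop (nhds 0) := by
    rw [Metric.tendsto_atTop]
    intro ε hε
    by_contra hcon
    push_neg at hcon
    set δ := ε / (2 * L) with hδdef
    have hδ0 : 0 < δ := by positivity
    have hshift : Tendsto (fun t => I (t + δ)) atTop (nhds (⨆ t, I t)) :=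
      hIconv.comp (tendsto_atTop_add_const_right _ δ tendsto_id)
    have hdiffto : Tendsto (fun t => I (t + δ) - I t) atTop (nhds 0) := by
      have := hshift.sub hIconv
      simpa using this
    obtain ⟨N, hN⟩ := (Metric.tendsto_atTop.1 hdiffto) (δ * (ε / 2)) (by positivity)
    obtain ⟨t, htN, hgt⟩ := hcon (max N 0)
    have ht0 : 0 ≤ t := le_trans (le_max_right N 0) htN
    have hgtε : ε ≤ g t := by
      have : dist (g t) 0 = g t := by
        rw [Real.dist_eq, sub_zero, abs_of_nonneg (sq_nonneg _)]
      linarith [hgt, this.symm.le, this.le]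
    have hLδ : L * δ = ε / 2 := by
      simp only [hδdef]
      field_simp [hL0.ne']
    have hlow : ∀ s ∈ Set.Icc t (t + δ), ε / 2 ≤ Q s := by
      intro s hs
      have hs0 : 0 ≤ s := le_trans ht0 hs.1
      have hQs : Q s = g s := by
        simp only [hQdef, hgdef, max_eq_left hs0]
      rw [hQs]
      have h1 := hLip s t ht0 hs.1
      have h2 : L * (s - t) ≤ L * δ :=
        mul_le_mul_of_nonneg_left (by linarith [hs.2]) hL0.le
      have h3 := (abs_le.1 h1).1
      linarith
    have hint : δ * (ε / 2) ≤ I (t + δ) - I t := by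
      rw [hIdiff t (t + δ)]
      calc δ * (ε / 2) = ∫ _s in t..(t + δ), (ε / 2) := by
            rw [intervalIntegral.integral_const, smul_eq_mul]
            ring_nf
        _ ≤ ∫ s in t..(t + δ), Q s :=
            intervalIntegral.integral_mono_on (by linarith)
              intervalIntegrable_const (hQc.intervalIntegrable _ _) hlow
    have hup := hN t (le_trans (le_max_left N 0) htN)
    rw [Real.dist_eq, sub_zero] at hup
    have := le_abs_self (I (t + δ) - I t)
    linarith
  -- conclude
  have hsq : Tendsto (fun t => Real.sqrt (g t)) atTop (nhds 0) := by
    have hc : Tendsto Real.sqrt (nhds 0) (nhds 0) := by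
      have := Real.continuous_sqrt.tendsto 0
      rwa [Real.sqrt_zero] at this
    exact hc.comp hgto
  rw [tendsto_zero_iff_norm_tendsto_zero]
  have : (fun t => ‖v l t‖) = fun t => Real.sqrt (g t) := by
    funext t
    rw [Real.norm_eq_abs, hgdef, Real.sqrt_sq_eq_abs]
  rw [this]
  exact hsq
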